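/- Let G be a connected unimodular locally compact group with Haar measure μ_G, and let A, B ⊆ G be nonempty compact sets with μ_G(A) + μ_G(B) ≥ μ_G(G). Then AB = G. -/

import Mathlib

open MeasureTheory Set Function
open scoped Pointwise ENNReal

/-- In a compact group, a Haar measure which is also right-invariant is
invariant under inversion (unimodularity). -/
lemma isInvInvariant_aux
    {G : Type*} [Group G] [TopologicalSpace G] [IsTopologicalGroup G]
    [LocallyCompactSpace G] [CompactSpace G] [T2Space G]
    [MeasurableSpace G] [BorelSpace G]
    (μ : Measure G) [μ.IsHaarMeasure] [μ.IsMulRightInvariant] :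
    μ.IsInvInvariant := by
  constructor
  haveI : Measure.IsHaarMeasure μ.inv :=
    { toIsFiniteMeasureOnCompacts := inferInstance
      toIsMulLeftInvariant := inferInstance
      toIsOpenPosMeasure := inferInstance }
  let c : ℝ≥0∞ := Measure.haarScalarFactor μ.inv μ
  have hc : μ.inv = c • μ := Measure.isMulLeftInvariant_eq_smul_of_regular μ.inv μ
  have key : Measure.map Inv.inv (Measure.map Inv.inv μ) = c ^ 2 • μ := by
    rw [← Measure.inv_def μ, hc, Measure.map_smul, ← Measure.inv_def μ, hc, smul_smul, pow_two]
  have μeq : μ = c ^ 2 • μ := by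
    rw [Measure.map_map continuous_inv.measurable continuous_inv.measurable] at key
    simpa only [inv_involutive, Involutive.comp_self, Measure.map_id] using key
  have K : TopologicalSpace.PositiveCompacts G := Classical.arbitrary _
  have h1 : c ^ 2 * μ K = 1 ^ 2 * μ K := by
    conv_rhs => rw [μeq]
    simp
  have h2 : c ^ 2 = 1 ^ 2 :=
    (ENNReal.mul_left_inj
      (Measure.measure_pos_of_nonempty_interior _ K.interior_nonempty).ne'
      K.isCompact.measure_lt_top.ne).1 h1
  have hc1 : c = 1 := (ENNReal.pow_right_strictMono two_ne_zero).injective h2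
  rw [hc, hc1, one_smul]

/-- If `G` is a connected unimodular locally compact group with Haar measure `μ`,
and `A`, `B` are nonempty compact subsets with `μ A + μ B ≥ μ G`, then `A * B = G`. -/
theorem product_eq_univ_of_measure_add_ge
    {G : Type*} [Group G] [TopologicalSpace G] [IsTopologicalGroup G]
    [LocallyCompactSpace G] [T2Space G] [ConnectedSpace G]
    [MeasurableSpace G] [BorelSpace G]
    (μ : Measure G) [μ.IsHaarMeasure] [μ.IsMulRightInvariant]
    {A B : Set G} (hA : A.Nonempty) (hB : B.Nonempty)
    (hAc : IsCompact A) (hBc : IsCompact B)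
    (h : μ univ ≤ μ A + μ B) :
    A * B = univ := by
  have hfin : μ univ < ∞ :=
    h.trans_lt (ENNReal.add_lt_top.2 ⟨hAc.measure_lt_top, hBc.measure_lt_top⟩)
  haveI : CompactSpace G := by
    by_contra hc
    haveI : NoncompactSpace G := not_compactSpace_iff.mp hc
    rw [measure_univ_of_isMulLeftInvariant μ] at hfin
    exact lt_irrefl _ hfin
  haveI := isInvInvariant_aux μ
  ext g
  simp only [mem_univ, iff_true]
  by_contra hg
  set C : Set G := g • B⁻¹ with hC
  have hCc : IsCompact C := (hBc.inv).smul g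
  have hCne : C.Nonempty := hB.inv.smul_set
  have hdisj : Disjoint A C := by
    rw [disjoint_left]
    rintro a haA ⟨b, hb, rfl⟩
    rw [mem_inv] at hb
    exact hg ⟨g * b, by simpa [smul_eq_mul] using haA, b⁻¹, hb, by group⟩
  have hμC : μ C = μ B := by
    rw [hC, measure_smul, Measure.measure_inv]
  have hunion : μ (A ∪ C) = μ univ := by
    apply le_antisymm (measure_mono (subset_univ _))
    calc μ univ ≤ μ A + μ B := h
    _ = μ A + μ C := by rw [hμC]
    _ = μ (A ∪ C) := (measure_union hdisj hCc.measurableSet).symm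
  have hcompl : μ (A ∪ C)ᶜ = 0 := by
    rw [measure_compl (hAc.measurableSet.union hCc.measurableSet)
      (measure_lt_top _ _).ne, hunion, tsub_self]
  have hcov : A ∪ C = univ := by
    by_contra hne
    have : ((A ∪ C)ᶜ).Nonempty := nonempty_compl.2 hne
    have hopen : IsOpen (A ∪ C)ᶜ := (hAc.isClosed.union hCc.isClosed).isOpen_compl
    exact (hopen.measure_pos μ this).ne' hcompl
  have hclopen : IsClopen A := by
    refine ⟨hAc.isClosed, ?_⟩
    have : Aᶜ = C := by
      apply Subset.antisymm
      · intro x hx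
        rcases (hcov ▸ mem_univ x : x ∈ A ∪ C) with h' | h'
        · exact absurd h' hx
        · exact h'
      · exact fun x hx => disjoint_right.1 hdisj hx
    rw [← isClosed_compl_iff, this]
    exact hCc.isClosed
  rcases isClopen_iff.1 hclopen with rfl | rfl
  · exact hA.ne_empty rfl
  · rcases hCne with ⟨x, hx⟩
    exact disjoint_left.1 hdisj (mem_univ x) hx
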